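/- arXiv:1011.4582 — 2 statements merged into one kernel-verified Lean document; each statement's English description precedes it below -/
import Mathlib

section
/- For w ∈ W and A ∈ {Δ, Φ₋}, the set −w_p((w^{-1}A) \ Δ_p) equals (w_p w^{-1} w₀ A) \ Δ_p, where w₀ is the longest element of W and w_p the longest element of the Weyl group of Φ_p. -/
open scoped RealInnerProductSpace

variable {V : Type*} [NormedAddCommGroup V] [InnerProductSpace ℝ V] [FiniteDimensional ℝ V]

/-- The coroot `2v/⟨v,v⟩` of a vector `v`. -/
noncomputable def coroot (v : V) : V := (2 / ⟪v, v⟫) • v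

/-- Reflection in the hyperplane orthogonal to `v`. -/
noncomputable def rootReflection (v : V) : V ≃ₗᵢ[ℝ] V := Submodule.reflection ((ℝ ∙ v)ᗮ)

/-- The Weyl group of a set of roots: the subgroup of linear isometries
generated by the reflections in the roots. -/
noncomputable def weylGroup (Φ : Set V) : Subgroup (V ≃ₗᵢ[ℝ] V) :=
  Subgroup.closure { g | ∃ v ∈ Φ, g = rootReflection v }

/-- Pointwise negation of a set of vectors. -/
def negSet (S : Set V) : Set V := (fun v => -v) '' S

/-- A (crystallographic) root system `Φ` with positive system `Φpos` and
fundamental system `α 1, …, α r`. -/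
structure IsRootSystem (Φ Φpos : Set V) {r : ℕ} (α : Fin r → V) : Prop where
  finite : Φ.Finite
  zero_not_mem : (0 : V) ∉ Φ
  neg_mem : ∀ v ∈ Φ, -v ∈ Φ
  pos_subset : Φpos ⊆ Φ
  pos_or_neg : ∀ v ∈ Φ, v ∈ Φpos ∨ -v ∈ Φpos
  pos_not_neg : ∀ v ∈ Φpos, -v ∉ Φpos
  simple_mem : ∀ i, α i ∈ Φpos
  simple_inj : Function.Injective α
  simple_span : Submodule.span ℝ (Set.range α) = ⊤
  pos_decomp : ∀ v ∈ Φpos, ∃ c : Fin r → ℕ, v = ∑ i, (c i : ℝ) • α i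
  reflect_mem : ∀ u ∈ Φ, ∀ v ∈ Φ, rootReflection u v ∈ Φ
  crystallographic : ∀ u ∈ Φ, ∀ v ∈ Φ, ∃ n : ℤ, ⟪coroot u, v⟫ = (n : ℝ)


lemma negSet_image (f : V ≃ₗᵢ[ℝ] V) (S : Set V) : ⇑f '' negSet S = negSet (⇑f '' S) := by
  unfold negSet
  rw [← Set.image_comp, ← Set.image_comp]
  apply Set.image_congr
  intro x _
  simp [map_neg]

lemma negSet_negSet (S : Set V) : negSet (negSet S) = S := by
  unfold negSet
  rw [← Set.image_comp]
  simp

lemma negSet_diff (S T : Set V) : negSet (S \ T) = negSet S \ negSet T := by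
  unfold negSet
  exact Set.image_diff neg_injective S T

theorem stmt13 {r : ℕ} (Φ Φpos : Set V) (α : Fin r → V)
    (hRS : IsRootSystem Φ Φpos α)
    (lam : Fin r → V)
    (hlam : ∀ i j, ⟪coroot (α i), lam j⟫ = if i = j then 1 else 0)
    (p : Fin r)
    (ρ : V) (hρ : ρ = (2:ℝ)⁻¹ • ∑ᶠ v ∈ Φpos, v)
    (Φp : Set V) (hΦp : Φp = {v ∈ Φ | ⟪lam p, v⟫ = 0})
    (Φpp : Set V) (hΦpp : Φpp = Φp ∩ Φpos)
    (ρp : V) (hρp : ρp = (2:ℝ)⁻¹ • ∑ᶠ v ∈ Φpp, v)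
    (cp : ℝ) (hcp : cp = 2 * ⟪lam p - ρp, coroot (α p)⟫)
    (Δp : Set V) (hΔp : Δp = α '' {i | i ≠ p})
    (wp : V ≃ₗᵢ[ℝ] V) (hwpW : wp ∈ weylGroup Φp)
    (hwp_pos : ⇑wp '' Φpp = negSet Φpp)
    (hwp_Δp : ⇑wp '' Δp = negSet Δp)
    (w0 : V ≃ₗᵢ[ℝ] V) (hw0W : w0 ∈ weylGroup Φ)
    (hw0_pos : ⇑w0 '' Φpos = negSet Φpos)
    (hw0_Δ : ⇑w0 '' Set.range α = negSet (Set.range α))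
    (w : V ≃ₗᵢ[ℝ] V) (hwW : w ∈ weylGroup Φ)
    (A : Set V) (hA : A = Set.range α ∨ A = negSet Φpos) :
    negSet (⇑wp '' ((⇑w ⁻¹' A) \ Δp)) = (⇑wp '' (⇑w.symm '' (⇑w0 '' A))) \ Δp := by
  have h1 : ⇑w ⁻¹' A = ⇑w.symm '' A := by
    ext x
    constructor
    · intro hx; exact ⟨w x, hx, w.symm_apply_apply x⟩
    · rintro ⟨y, hy, rfl⟩; simpa using hy
  have h0 : ⇑w0 '' A = negSet A := by
    rcases hA with rfl | rfl
    · exact hw0_Δ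
    · rw [negSet_image, hw0_pos]
  rw [h1, h0, negSet_image w.symm, negSet_image wp,
    Set.image_diff wp.injective, negSet_diff, hwp_Δp, negSet_negSet]
end

section
/- For any w ∈ W, the disjoint union decomposition Φ = w^{-1}Φ₋ ⊔ w_p((w₀ w w_p)^{-1}Φ₋) holds, where w₀ is the longest element of W and w_p the longest element of the Weyl group of Φ_p. -/
open scoped RealInnerProductSpace

variable {V : Type*} [NormedAddCommGroup V] [InnerProductSpace ℝ V] [FiniteDimensional ℝ V]

lemma weyl_preserves (Φ : Set V) (hrefl : ∀ u ∈ Φ, ∀ v ∈ Φ, rootReflection u v ∈ Φ)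
    {g : V ≃ₗᵢ[ℝ] V} (hg : g ∈ weylGroup Φ) : ∀ v ∈ Φ, g v ∈ Φ ∧ g.symm v ∈ Φ := by
  induction hg using Subgroup.closure_induction with
  | mem g hgen =>
    obtain ⟨u, hu, rfl⟩ := hgen
    intro v hv
    refine ⟨hrefl u hu v hv, ?_⟩
    have : (rootReflection u).symm = rootReflection u := Submodule.reflection_symm
    rw [this]; exact hrefl u hu v hv
  | one => intro v hv; simpa using ⟨hv, hv⟩
  | mul a b _ _ ha hb =>
    intro v hv
    constructor
    · exact (ha _ (hb v hv).1).1
    · exact (hb _ (ha v hv).2).2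
  | inv a _ ha =>
    intro v hv
    exact ⟨(ha v hv).2, (ha v hv).1⟩

theorem stmt16 {r : ℕ} (Φ Φpos : Set V) (α : Fin r → V)
    (hRS : IsRootSystem Φ Φpos α)
    (lam : Fin r → V)
    (hlam : ∀ i j, ⟪coroot (α i), lam j⟫ = if i = j then 1 else 0)
    (p : Fin r)
    (ρ : V) (hρ : ρ = (2:ℝ)⁻¹ • ∑ᶠ v ∈ Φpos, v)
    (Φp : Set V) (hΦp : Φp = {v ∈ Φ | ⟪lam p, v⟫ = 0})
    (Φpp : Set V) (hΦpp : Φpp = Φp ∩ Φpos)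
    (ρp : V) (hρp : ρp = (2:ℝ)⁻¹ • ∑ᶠ v ∈ Φpp, v)
    (cp : ℝ) (hcp : cp = 2 * ⟪lam p - ρp, coroot (α p)⟫)
    (wp : V ≃ₗᵢ[ℝ] V) (hwpW : wp ∈ weylGroup Φp)
    (hwp_pos : ⇑wp '' Φpp = negSet Φpp)
    (w0 : V ≃ₗᵢ[ℝ] V) (hw0W : w0 ∈ weylGroup Φ)
    (hw0_pos : ⇑w0 '' Φpos = negSet Φpos)
    (hw0_Δ : ⇑w0 '' Set.range α = negSet (Set.range α))
    (w : V ≃ₗᵢ[ℝ] V) (hwW : w ∈ weylGroup Φ)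
    :
    Φ = (⇑w ⁻¹' (negSet Φpos)) ∪ (⇑wp '' ((⇑w0 ∘ ⇑w ∘ ⇑wp) ⁻¹' (negSet Φpos))) ∧
      Disjoint (⇑w ⁻¹' (negSet Φpos)) (⇑wp '' ((⇑w0 ∘ ⇑w ∘ ⇑wp) ⁻¹' (negSet Φpos))) := by
  classical
  have hw := weyl_preserves Φ hRS.reflect_mem hwW
  have hw0 : ∀ x, x ∈ Φpos ↔ w0 x ∈ negSet Φpos := by
    intro x
    constructor
    · intro hx; rw [← hw0_pos]; exact ⟨x, hx, rfl⟩
    · rintro hx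
      rw [← hw0_pos] at hx
      obtain ⟨y, hy, hxy⟩ := hx
      have := w0.injective hxy
      rwa [← this]
  -- describe the second set
  have hsecond : ⇑wp '' ((⇑w0 ∘ ⇑w ∘ ⇑wp) ⁻¹' (negSet Φpos)) = {x | w x ∈ Φpos} := by
    ext x
    constructor
    · rintro ⟨y, hy, rfl⟩
      simp only [Set.mem_preimage, Function.comp_apply] at hy
      exact (hw0 (w (wp y))).2 hy
    · intro hx
      refine ⟨wp.symm x, ?_, wp.apply_symm_apply x⟩
      simp only [Set.mem_preimage, Function.comp_apply, wp.apply_symm_apply]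
      exact (hw0 (w x)).1 hx
  have hfirst : ∀ x, x ∈ (⇑w ⁻¹' (negSet Φpos)) ↔ ∃ u ∈ Φpos, w x = -u := by
    intro x
    constructor
    · rintro ⟨u, hu, hux⟩; exact ⟨u, hu, hux.symm⟩
    · rintro ⟨u, hu, hux⟩; exact ⟨u, hu, hux.symm⟩
  rw [hsecond]
  constructor
  · ext x
    constructor
    · intro hx
      have hwx : w x ∈ Φ := (hw x hx).1
      rcases hRS.pos_or_neg _ hwx with h | h
      · exact Or.inr h
      · exact Or.inl ((hfirst x).2 ⟨-(w x), h, (neg_neg _).symm⟩)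
    · rintro (hx | hx)
      · obtain ⟨u, hu, hux⟩ := (hfirst x).1 hx
        have : w x ∈ Φ := hux ▸ hRS.neg_mem u (hRS.pos_subset hu)
        have := (hw _ this).2
        rwa [w.symm_apply_apply] at this
      · have : w x ∈ Φ := hRS.pos_subset hx
        have := (hw _ this).2
        rwa [w.symm_apply_apply] at this
  · rw [Set.disjoint_left]
    rintro x ⟨u, hu, hux⟩ hx2
    exact hRS.pos_not_neg u hu (by simpa [hux] using hx2)
end
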